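/- Proposition C.1 (existence, uniqueness and exponential convergence of the standing wave): Assume W satisfies the double-well assumptions. Then there exists a unique strictly increasing C² function q : ℝ → ℝ with values in (-1,1) such that q(0) = 0, q''(s) = W'(q(s)) for all s ∈ ℝ, and q(s) → 1 as s → +∞ and q(s) → −1 as s → −∞. Moreover there is a constant C > 0 such that |q(s) − 1| ≤ C exp(−s/C) for all s ≥ 0 and |q(s) + 1| ≤ C exp(s/C) for all s ≤ 0. -/

import Mathlib

open Set Filter Topology

noncomputable section

def DoubleWell (W : ℝ → ℝ) : Prop :=
  ContDiff ℝ 3 W ∧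
  (∀ u ∈ Set.Icc (-1:ℝ) 1, 0 ≤ W u) ∧
  W (-1) = 0 ∧ W 1 = 0 ∧
  (∀ u ∈ Set.Ioo (-1:ℝ) 1, 0 < W u) ∧
  deriv W (-1) = 0 ∧ deriv W 0 = 0 ∧ deriv W 1 = 0 ∧
  (∀ u ∈ Set.Ioo (-1:ℝ) 0, 0 < deriv W u) ∧
  (∀ u ∈ Set.Ioo (0:ℝ) 1, deriv W u < 0) ∧
  0 < deriv (deriv W) (-1) ∧ 0 < deriv (deriv W) 1 ∧ deriv (deriv W) 0 < 0

/-- The defining properties of the standing wave. -/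
def StandingWave (W q : ℝ → ℝ) : Prop :=
  ContDiff ℝ 2 q ∧ StrictMono q ∧ (∀ s, q s ∈ Set.Ioo (-1:ℝ) 1) ∧ q 0 = 0 ∧
  (∀ s, deriv (deriv q) s = deriv W (q s)) ∧
  Filter.Tendsto q Filter.atTop (nhds 1) ∧ Filter.Tendsto q Filter.atBot (nhds (-1))

section auxx
open MeasureTheory intervalIntegral
lemma quad_upper (f : ℝ → ℝ) (hf : ContDiff ℝ 2 f) (f1 : f 1 = 0) (f1' : deriv f 1 = 0) :
    ∃ M > 0, ∀ u ∈ Icc (-1:ℝ) 1, f u ≤ M * (1 - u)^2 := by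
  have hf1 : ContDiff ℝ 1 (deriv f) :=
    (contDiff_succ_iff_deriv.mp (show ContDiff ℝ (1+1) f from by norm_num [hf])).2.2
  have hdf : Differentiable ℝ f := hf.differentiable (by norm_num)
  have hddf : Differentiable ℝ (deriv f) := hf1.differentiable (by norm_num)
  have hcont2 : Continuous (deriv (deriv f)) := (contDiff_one_iff_deriv.mp hf1).2
  obtain ⟨M₂, hM₂⟩ := (isCompact_Icc (a := (-1:ℝ)) (b := 1)).exists_bound_of_continuousOn
    hcont2.continuousOn
  set M := max M₂ 0 + 1 with hM
  have hMpos : 0 < M := by positivity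
  refine ⟨M, hMpos, ?_⟩
  have step1 : ∀ v ∈ Icc (-1:ℝ) 1, -(deriv f v) ≤ M * (1 - v) := by
    intro v hv
    have h := Convex.norm_image_sub_le_of_norm_deriv_le (f := deriv f) (s := Icc (-1:ℝ) 1)
      (C := M) (fun x _ => hddf x)
      (fun x hx => by
        have h0 := hM₂ x hx
        simp only [Real.norm_eq_abs] at h0 ⊢
        have : M₂ ≤ M := by simp only [hM]; linarith [le_max_left M₂ (0:ℝ)]
        linarith) (convex_Icc _ _)
      (right_mem_Icc.mpr (by norm_num)) hv
    rw [f1'] at h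
    simp only [Real.norm_eq_abs, sub_zero] at h
    have habs : |v - 1| = 1 - v := by rw [abs_sub_comm]; exact abs_of_nonneg (by linarith [hv.2])
    rw [habs] at h
    linarith [(abs_le.mp h).1]
  have Hψ : ∀ x : ℝ, HasDerivAt (fun u => M/2 * (1-u)^2 - f u)
      (M/2 * (2*(1-x)^1*(-1)) - deriv f x) x := by
    intro x
    exact ((((hasDerivAt_id x).const_sub 1).pow 2).const_mul (M/2)).sub (hdf x).hasDerivAt
  have hanti : AntitoneOn (fun u => M/2 * (1 - u)^2 - f u) (Icc (-1:ℝ) 1) := by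
    apply antitoneOn_of_deriv_nonpos (convex_Icc _ _)
    · exact (Continuous.continuousOn (by continuity)).sub hdf.continuous.continuousOn
    · intro x _
      exact (Hψ x).differentiableAt.differentiableWithinAt
    · intro x hx
      rw [interior_Icc] at hx
      rw [(Hψ x).deriv]
      have := step1 x (Ioo_subset_Icc_self hx)
      nlinarith [hMpos.le, hx.2]
  intro u hu
  have h := hanti hu (right_mem_Icc.mpr (by norm_num)) hu.2
  simp only [f1, sub_self, sub_zero] at h
  nlinarith [sq_nonneg (1-u)]

lemma quad_lower (f : ℝ → ℝ) (hf : ContDiff ℝ 2 f) (f1 : f 1 = 0) (f1' : deriv f 1 = 0)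
    (f1'' : 0 < deriv (deriv f) 1) (hpos : ∀ u ∈ Ico (0:ℝ) 1, 0 < f u) :
    ∃ c > 0, ∀ u ∈ Icc (0:ℝ) 1, c * (1 - u)^2 ≤ f u := by
  have hf1 : ContDiff ℝ 1 (deriv f) :=
    (contDiff_succ_iff_deriv.mp (show ContDiff ℝ (1+1) f from by norm_num [hf])).2.2
  have hdf : Differentiable ℝ f := hf.differentiable (by norm_num)
  have hddf : Differentiable ℝ (deriv f) := hf1.differentiable (by norm_num)
  have hcont2 : Continuous (deriv (deriv f)) := (contDiff_one_iff_deriv.mp hf1).2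
  set c₀ := deriv (deriv f) 1 / 2 with hc₀
  have hc₀pos : 0 < c₀ := by positivity
  -- find δ with deriv² f ≥ c₀ on [1-δ,1]
  have hev : ∀ᶠ v in 𝓝 (1:ℝ), c₀ < deriv (deriv f) v := by
    exact (hcont2.continuousAt (x := 1)).eventually (eventually_gt_nhds (by linarith))
  obtain ⟨δ₀, hδ₀pos, hδ₀⟩ := Metric.eventually_nhds_iff_ball.mp hev
  set δ := min (δ₀/2) 1 with hδ
  have hδpos : 0 < δ := by positivity
  have hδ1 : δ ≤ 1 := min_le_right _ _
  have hball : ∀ v ∈ Icc (1-δ) 1, c₀ ≤ deriv (deriv f) v := by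
    intro v hv
    refine le_of_lt (hδ₀ v ?_)
    rw [Metric.mem_ball, Real.dist_eq]
    have : δ ≤ δ₀/2 := min_le_left _ _
    rw [abs_sub_lt_iff]; constructor <;> [linarith [hv.2]; linarith [hv.1]]
  -- φ = deriv f + c₀(1-·) is monotone on [1-δ,1], φ 1 = 0
  have Hφ : ∀ x : ℝ, HasDerivAt (fun v => deriv f v + c₀ * (1 - v))
      (deriv (deriv f) x + c₀ * (-1)) x := by
    intro x
    exact ((hddf x).hasDerivAt).add (((hasDerivAt_id x).const_sub 1).const_mul c₀)
  have hmono : MonotoneOn (fun v => deriv f v + c₀ * (1 - v)) (Icc (1-δ) 1) := by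
    apply monotoneOn_of_deriv_nonneg (convex_Icc _ _)
    · exact hddf.continuous.continuousOn.add ((continuous_const.mul (continuous_const.sub continuous_id)).continuousOn)
    · intro x _; exact (Hφ x).differentiableAt.differentiableWithinAt
    · intro x hx
      rw [interior_Icc] at hx
      rw [(Hφ x).deriv]
      have := hball x (Ioo_subset_Icc_self hx)
      linarith
  have step1 : ∀ v ∈ Icc (1-δ) 1, deriv f v ≤ -(c₀ * (1 - v)) := by
    intro v hv
    have h := hmono hv (right_mem_Icc.mpr (by linarith)) hv.2
    simp only [f1', sub_self, mul_zero, add_zero] at h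
    linarith
  -- θ = f - c₀/2 (1-·)² is antitone on [1-δ,1], θ 1 = 0
  have Hθ : ∀ x : ℝ, HasDerivAt (fun u => f u - c₀/2 * (1-u)^2)
      (deriv f x - c₀/2 * (2*(1-x)^1*(-1))) x := by
    intro x
    exact ((hdf x).hasDerivAt).sub ((((hasDerivAt_id x).const_sub 1).pow 2).const_mul (c₀/2))
  have hanti : AntitoneOn (fun u => f u - c₀/2 * (1 - u)^2) (Icc (1-δ) 1) := by
    apply antitoneOn_of_deriv_nonpos (convex_Icc _ _)
    · exact hdf.continuous.continuousOn.sub ((continuous_const.mul ((continuous_const.sub continuous_id).pow 2)).continuousOn)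
    · intro x _; exact (Hθ x).differentiableAt.differentiableWithinAt
    · intro x hx
      rw [interior_Icc] at hx
      rw [(Hθ x).deriv]
      have := step1 x (Ioo_subset_Icc_self hx)
      nlinarith
  have near : ∀ u ∈ Icc (1-δ) 1, c₀/2 * (1-u)^2 ≤ f u := by
    intro u hu
    have h := hanti hu (right_mem_Icc.mpr (by linarith)) hu.2
    simp only [f1, sub_self, zero_sub] at h
    linarith
  -- min on [0, 1-δ]
  by_cases hcase : 1 - δ ≤ 0
  · refine ⟨c₀/2, by positivity, ?_⟩
    intro u hu
    exact near u ⟨by linarith [hu.1], hu.2⟩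
  · push_neg at hcase
    have hne : (Icc (0:ℝ) (1-δ)).Nonempty := ⟨0, by constructor <;> linarith⟩
    obtain ⟨x₀, hx₀mem, hx₀⟩ := (isCompact_Icc (a := (0:ℝ)) (b := 1-δ)).exists_isMinOn hne
      hdf.continuous.continuousOn
    have hm : 0 < f x₀ := hpos x₀ ⟨hx₀mem.1, by linarith [hx₀mem.2]⟩
    refine ⟨min (c₀/2) (f x₀), lt_min (by positivity) hm, ?_⟩
    intro u hu
    by_cases h2 : 1 - δ ≤ u
    · calc min (c₀/2) (f x₀) * (1-u)^2 ≤ c₀/2 * (1-u)^2 := by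
            apply mul_le_mul_of_nonneg_right (min_le_left _ _) (sq_nonneg _)
        _ ≤ f u := near u ⟨h2, hu.2⟩
    · push_neg at h2
      have hsq : (1-u)^2 ≤ 1 := by nlinarith [hu.1, hu.2]
      calc min (c₀/2) (f x₀) * (1-u)^2 ≤ f x₀ * 1 := by
            apply mul_le_mul (min_le_right _ _) hsq (sq_nonneg _) hm.le
        _ = f x₀ := mul_one _
        _ ≤ f u := hx₀ ⟨hu.1, h2.le⟩

lemma W_bounds (W : ℝ → ℝ) (hW : DoubleWell W) : ∃ M > 0, ∃ c > 0,
    (∀ u ∈ Icc (-1:ℝ) 1, W u ≤ M * (1-u)^2) ∧ (∀ u ∈ Icc (-1:ℝ) 1, W u ≤ M * (1+u)^2) ∧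
    (∀ u ∈ Icc (0:ℝ) 1, c * (1-u)^2 ≤ W u) ∧ (∀ u ∈ Icc (-1:ℝ) 0, c * (1+u)^2 ≤ W u) := by
  obtain ⟨h3, hnn, hm1, h1, hpos, hd1, hd0, hd1', hdp, hdn, hdd1, hdd2, hdd0⟩ := hW
  have h2 : ContDiff ℝ 2 W := h3.of_le (by norm_num)
  set g : ℝ → ℝ := fun u => W (-u) with hg
  have hg2 : ContDiff ℝ 2 g := h2.comp (contDiff_neg)
  have hgd : ∀ x, deriv g x = -deriv W (-x) := fun x => deriv_comp_neg W x
  have hgd1 : deriv g 1 = 0 := by rw [hgd]; rw [hd1]; ring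
  have hgdd : deriv (deriv g) 1 = deriv (deriv W) (-1) := by
    have : deriv g = fun x => -deriv W (-x) := funext hgd
    rw [this]
    rw [deriv.fun_neg]
    rw [deriv_comp_neg (deriv W) 1]
    ring
  obtain ⟨M₁, hM₁, hub₁⟩ := quad_upper W h2 h1 hd1'
  obtain ⟨M₂, hM₂, hub₂⟩ := quad_upper g hg2 (by simpa [hg] using hm1) hgd1
  obtain ⟨c₁, hc₁, hlb₁⟩ := quad_lower W h2 h1 hd1' hdd2
    (fun u hu => hpos u ⟨by linarith [hu.1], hu.2⟩)
  obtain ⟨c₂, hc₂, hlb₂⟩ := quad_lower g hg2 (by simpa [hg] using hm1) hgd1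
    (by rw [hgdd]; exact hdd1)
    (fun u hu => hpos (-u) ⟨by linarith [hu.2], by linarith [hu.1]⟩)
  refine ⟨max M₁ M₂, by positivity, min c₁ c₂, lt_min hc₁ hc₂, ?_, ?_, ?_, ?_⟩
  · intro u hu
    calc W u ≤ M₁ * (1-u)^2 := hub₁ u hu
      _ ≤ max M₁ M₂ * (1-u)^2 := by
          apply mul_le_mul_of_nonneg_right (le_max_left _ _) (sq_nonneg _)
  · intro u hu
    have := hub₂ (-u) ⟨by linarith [hu.2], by linarith [hu.1]⟩
    simp only [hg, neg_neg] at this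
    calc W u ≤ M₂ * (1 - (-u))^2 := this
      _ = M₂ * (1+u)^2 := by ring_nf
      _ ≤ max M₁ M₂ * (1+u)^2 := by
          apply mul_le_mul_of_nonneg_right (le_max_right _ _) (sq_nonneg _)
  · intro u hu
    calc min c₁ c₂ * (1-u)^2 ≤ c₁ * (1-u)^2 := by
          apply mul_le_mul_of_nonneg_right (min_le_left _ _) (sq_nonneg _)
      _ ≤ W u := hlb₁ u hu
  · intro u hu
    have := hlb₂ (-u) ⟨by linarith [hu.2], by linarith [hu.1]⟩
    simp only [hg, neg_neg] at this
    calc min c₁ c₂ * (1+u)^2 ≤ c₂ * (1+u)^2 := by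
          apply mul_le_mul_of_nonneg_right (min_le_right _ _) (sq_nonneg _)
      _ = c₂ * (1 - -u)^2 := by ring_nf
      _ ≤ W u := this

def rhoW (W : ℝ → ℝ) (t : ℝ) : ℝ := (Real.sqrt (2 * W t))⁻¹

def Fint (W : ℝ → ℝ) (u : ℝ) : ℝ := ∫ t in (0:ℝ)..u, rhoW W t

variable {W : ℝ → ℝ}

lemma sqrt2W_pos (hW : DoubleWell W) {t : ℝ} (ht : t ∈ Ioo (-1:ℝ) 1) :
    0 < Real.sqrt (2 * W t) :=
  Real.sqrt_pos.mpr (by have := hW.2.2.2.2.1 t ht; linarith)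

lemma rhoW_pos (hW : DoubleWell W) {t : ℝ} (ht : t ∈ Ioo (-1:ℝ) 1) : 0 < rhoW W t :=
  inv_pos.mpr (sqrt2W_pos hW ht)

lemma rhoW_contOn (hW : DoubleWell W) : ContinuousOn (rhoW W) (Ioo (-1:ℝ) 1) := by
  apply ContinuousOn.inv₀
  · exact (Real.continuous_sqrt.comp
      (continuous_const.mul (hW.1.continuous))).continuousOn
  · intro t ht; exact (sqrt2W_pos hW ht).ne'

lemma rhoW_intgb (hW : DoubleWell W) {a b : ℝ} (ha : a ∈ Ioo (-1:ℝ) 1)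
    (hb : b ∈ Ioo (-1:ℝ) 1) : IntervalIntegrable (rhoW W) MeasureTheory.volume a b :=
  ((rhoW_contOn hW).mono ((ordConnected_Ioo).uIcc_subset ha hb)).intervalIntegrable

lemma zero_mem : (0:ℝ) ∈ Ioo (-1:ℝ) 1 := by norm_num

lemma Fint_sub (hW : DoubleWell W) {a b : ℝ} (ha : a ∈ Ioo (-1:ℝ) 1)
    (hb : b ∈ Ioo (-1:ℝ) 1) :
    Fint W b - Fint W a = ∫ t in a..b, rhoW W t :=
  intervalIntegral.integral_interval_sub_left (rhoW_intgb hW zero_mem hb)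
    (rhoW_intgb hW zero_mem ha)

lemma Fint_strictMonoOn (hW : DoubleWell W) : StrictMonoOn (Fint W) (Ioo (-1:ℝ) 1) := by
  intro a ha b hb hab
  have h : 0 < ∫ t in a..b, rhoW W t := by
    apply intervalIntegral.intervalIntegral_pos_of_pos_on (rhoW_intgb hW ha hb)
    · intro x hx
      exact rhoW_pos hW ⟨lt_trans ha.1 hx.1, lt_trans hx.2 hb.2⟩
    · exact hab
  have := Fint_sub hW ha hb
  linarith

lemma Fint_hasDerivAt (hW : DoubleWell W) {u : ℝ} (hu : u ∈ Ioo (-1:ℝ) 1) :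
    HasDerivAt (Fint W) (rhoW W u) u := by
  apply intervalIntegral.integral_hasDerivAt_right (rhoW_intgb hW zero_mem hu)
  · exact (rhoW_contOn hW).stronglyMeasurableAtFilter isOpen_Ioo u hu
  · exact (rhoW_contOn hW).continuousAt (isOpen_Ioo.mem_nhds hu)

lemma Fint_zero : Fint W 0 = 0 := intervalIntegral.integral_same

-- helper integral computations
lemma int_inv_right {u : ℝ} (hu : u ∈ Ico (0:ℝ) 1) :
    ∫ t in (0:ℝ)..u, (1-t)⁻¹ = -Real.log (1-u) := by
  have huIcc : uIcc (0:ℝ) u = Icc 0 u := uIcc_of_le hu.1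
  have hderiv : ∀ t ∈ uIcc (0:ℝ) u, HasDerivAt (fun t => -Real.log (1-t)) ((1-t)⁻¹) t := by
    intro t ht
    rw [huIcc] at ht
    have hne : (1:ℝ) - t ≠ 0 := by have := ht.2; have := hu.2; intro h; linarith [hu.2]
    have h1 : HasDerivAt (fun t : ℝ => 1 - t) (-1) t := (hasDerivAt_id t).const_sub 1
    have h2 := (Real.hasDerivAt_log hne).comp t h1
    have h3 := h2.neg
    refine h3.congr_deriv ?_
    simp
  have hint : IntervalIntegrable (fun t : ℝ => (1-t)⁻¹) volume 0 u := by
    apply ContinuousOn.intervalIntegrable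
    apply ContinuousOn.inv₀ (by fun_prop)
    intro t ht
    rw [huIcc] at ht
    intro h; linarith [ht.2, hu.2]
  rw [integral_eq_sub_of_hasDerivAt hderiv hint]
  simp

lemma int_inv_left {u : ℝ} (hu : u ∈ Ioc (-1:ℝ) 0) :
    ∫ t in u..(0:ℝ), (1+t)⁻¹ = -Real.log (1+u) := by
  have huIcc : uIcc u (0:ℝ) = Icc u 0 := uIcc_of_le hu.2
  have hderiv : ∀ t ∈ uIcc u (0:ℝ), HasDerivAt (fun t => Real.log (1+t)) ((1+t)⁻¹) t := by
    intro t ht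
    rw [huIcc] at ht
    have hne : (1:ℝ) + t ≠ 0 := by intro h; linarith [ht.1, hu.1]
    have h1 : HasDerivAt (fun t : ℝ => 1 + t) 1 t := (hasDerivAt_id t).const_add 1
    have h2 := (Real.hasDerivAt_log hne).comp t h1
    refine h2.congr_deriv ?_
    simp
  have hint : IntervalIntegrable (fun t : ℝ => (1+t)⁻¹) volume u 0 := by
    apply ContinuousOn.intervalIntegrable
    apply ContinuousOn.inv₀ (by fun_prop)
    intro t ht
    rw [huIcc] at ht
    intro h; linarith [ht.1, hu.1]
  rw [integral_eq_sub_of_hasDerivAt hderiv hint]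
  simp

lemma Fint_log_bounds (hW : DoubleWell W) : ∃ A : ℝ, 1 ≤ A ∧
    (∀ u ∈ Ico (0:ℝ) 1, A⁻¹ * (-Real.log (1-u)) ≤ Fint W u ∧ Fint W u ≤ A * (-Real.log (1-u))) ∧
    (∀ u ∈ Ioc (-1:ℝ) 0, A * Real.log (1+u) ≤ Fint W u ∧ Fint W u ≤ A⁻¹ * Real.log (1+u)) := by
  obtain ⟨M, hM, c, hc, hub1, hub2, hlb1, hlb2⟩ := W_bounds W hW
  set a₁ := (Real.sqrt (2*M))⁻¹ with ha₁def
  set a₂ := (Real.sqrt (2*c))⁻¹ with ha₂def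
  have ha₁ : 0 < a₁ := by rw [ha₁def]; positivity
  have ha₂ : 0 < a₂ := by rw [ha₂def]; positivity
  -- pointwise bounds, right side
  have hptR : ∀ t ∈ Ico (0:ℝ) 1, a₁ * (1-t)⁻¹ ≤ rhoW W t ∧ rhoW W t ≤ a₂ * (1-t)⁻¹ := by
    intro t ht
    have h1t : (0:ℝ) < 1 - t := by linarith [ht.2]
    have htIoo : t ∈ Ioo (-1:ℝ) 1 := ⟨by linarith [ht.1], ht.2⟩
    have hspos := sqrt2W_pos hW htIoo
    have hsubLe : Real.sqrt (2 * W t) ≤ Real.sqrt (2*M) * (1-t) := by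
      have h1 : 2 * W t ≤ 2*M * (1-t)^2 := by
        have := hub1 t ⟨by linarith [ht.1], ht.2.le⟩; linarith
      calc Real.sqrt (2 * W t) ≤ Real.sqrt (2*M * (1-t)^2) := Real.sqrt_le_sqrt h1
        _ = Real.sqrt (2*M) * (1-t) := by
            rw [show 2*M*(1-t)^2 = (2*M)*((1-t)^2) by ring, Real.sqrt_mul (by positivity) _,
              Real.sqrt_sq h1t.le]
    have hsubGe : Real.sqrt (2*c) * (1-t) ≤ Real.sqrt (2 * W t) := by
      have h1 : 2*c * (1-t)^2 ≤ 2 * W t := by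
        have := hlb1 t ⟨ht.1, ht.2.le⟩; linarith
      calc Real.sqrt (2*c) * (1-t)
          = Real.sqrt (2*c*(1-t)^2) := by
            rw [show 2*c*(1-t)^2 = (2*c)*((1-t)^2) by ring, Real.sqrt_mul (by positivity) ((1-t)^2),
              Real.sqrt_sq h1t.le]
        _ ≤ Real.sqrt (2 * W t) := Real.sqrt_le_sqrt h1
    constructor
    · rw [show a₁ * (1-t)⁻¹ = (Real.sqrt (2*M) * (1-t))⁻¹ by rw [mul_inv, ha₁def]]
      exact inv_anti₀ hspos hsubLe
    · rw [show a₂ * (1-t)⁻¹ = (Real.sqrt (2*c) * (1-t))⁻¹ by rw [mul_inv, ha₂def]]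
      exact inv_anti₀ (by positivity) hsubGe
  -- pointwise bounds, left side
  have hptL : ∀ t ∈ Ioc (-1:ℝ) 0, a₁ * (1+t)⁻¹ ≤ rhoW W t ∧ rhoW W t ≤ a₂ * (1+t)⁻¹ := by
    intro t ht
    have h1t : (0:ℝ) < 1 + t := by linarith [ht.1]
    have htIoo : t ∈ Ioo (-1:ℝ) 1 := ⟨ht.1, by linarith [ht.2]⟩
    have hspos := sqrt2W_pos hW htIoo
    have hsubLe : Real.sqrt (2 * W t) ≤ Real.sqrt (2*M) * (1+t) := by
      have h1 : 2 * W t ≤ 2*M * (1+t)^2 := by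
        have := hub2 t ⟨ht.1.le, by linarith [ht.2]⟩; linarith
      calc Real.sqrt (2 * W t) ≤ Real.sqrt (2*M * (1+t)^2) := Real.sqrt_le_sqrt h1
        _ = Real.sqrt (2*M) * (1+t) := by
            rw [show 2*M*(1+t)^2 = (2*M)*((1+t)^2) by ring, Real.sqrt_mul (by positivity) _,
              Real.sqrt_sq h1t.le]
    have hsubGe : Real.sqrt (2*c) * (1+t) ≤ Real.sqrt (2 * W t) := by
      have h1 : 2*c * (1+t)^2 ≤ 2 * W t := by
        have := hlb2 t ⟨ht.1.le, ht.2⟩; linarith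
      calc Real.sqrt (2*c) * (1+t)
          = Real.sqrt (2*c*(1+t)^2) := by
            rw [show 2*c*(1+t)^2 = (2*c)*((1+t)^2) by ring, Real.sqrt_mul (by positivity) ((1+t)^2),
              Real.sqrt_sq h1t.le]
        _ ≤ Real.sqrt (2 * W t) := Real.sqrt_le_sqrt h1
    constructor
    · rw [show a₁ * (1+t)⁻¹ = (Real.sqrt (2*M) * (1+t))⁻¹ by rw [mul_inv, ha₁def]]
      exact inv_anti₀ hspos hsubLe
    · rw [show a₂ * (1+t)⁻¹ = (Real.sqrt (2*c) * (1+t))⁻¹ by rw [mul_inv, ha₂def]]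
      exact inv_anti₀ (by positivity) hsubGe
  set A := max a₂ (max a₁⁻¹ 1) with hAdef
  have hA1 : (1:ℝ) ≤ A := le_trans (le_max_right _ _) (le_max_right _ _)
  have hApos : 0 < A := by linarith
  have hAa₂ : a₂ ≤ A := le_max_left _ _
  have hAinv : A⁻¹ ≤ a₁ := by
    have h1 : a₁⁻¹ ≤ A := le_trans (le_max_left _ _) (le_max_right _ _)
    calc A⁻¹ ≤ (a₁⁻¹)⁻¹ := inv_anti₀ (by positivity) h1
      _ = a₁ := inv_inv a₁
  have hAinvpos : 0 < A⁻¹ := by positivity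
  refine ⟨A, hA1, ?_, ?_⟩
  · intro u hu
    have huIoo : u ∈ Ioo (-1:ℝ) 1 := ⟨by linarith [hu.1], hu.2⟩
    have hρint := rhoW_intgb hW zero_mem huIoo
    have hcont1 : IntervalIntegrable (fun t : ℝ => (1-t)⁻¹) volume 0 u := by
      apply ContinuousOn.intervalIntegrable
      apply ContinuousOn.inv₀ (by fun_prop)
      intro t ht
      rw [uIcc_of_le hu.1] at ht
      intro h; linarith [ht.2, hu.2]
    have hmem : ∀ t ∈ Icc (0:ℝ) u, t ∈ Ico (0:ℝ) 1 :=
      fun t ht => ⟨ht.1, lt_of_le_of_lt ht.2 hu.2⟩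
    have hlow : a₁ * (-Real.log (1-u)) ≤ Fint W u := by
      have h := intervalIntegral.integral_mono_on hu.1 (hcont1.const_mul a₁) hρint
        (fun t ht => (hptR t (hmem t ht)).1)
      rwa [intervalIntegral.integral_const_mul, int_inv_right hu] at h
    have hhigh : Fint W u ≤ a₂ * (-Real.log (1-u)) := by
      have h := intervalIntegral.integral_mono_on hu.1 hρint (hcont1.const_mul a₂)
        (fun t ht => (hptR t (hmem t ht)).2)
      rwa [intervalIntegral.integral_const_mul, int_inv_right hu] at h
    have hlogpos : 0 ≤ -Real.log (1-u) := by
      have : Real.log (1-u) ≤ 0 := Real.log_nonpos (by linarith [hu.1, hu.2]) (by linarith [hu.1, hu.2])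
      linarith
    constructor
    · calc A⁻¹ * (-Real.log (1-u)) ≤ a₁ * (-Real.log (1-u)) :=
            mul_le_mul_of_nonneg_right hAinv hlogpos
        _ ≤ Fint W u := hlow
    · calc Fint W u ≤ a₂ * (-Real.log (1-u)) := hhigh
        _ ≤ A * (-Real.log (1-u)) := mul_le_mul_of_nonneg_right hAa₂ hlogpos
  · intro u hu
    have huIoo : u ∈ Ioo (-1:ℝ) 1 := ⟨hu.1, by linarith [hu.2]⟩
    have hρint := rhoW_intgb hW huIoo zero_mem
    have hcont1 : IntervalIntegrable (fun t : ℝ => (1+t)⁻¹) volume u 0 := by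
      apply ContinuousOn.intervalIntegrable
      apply ContinuousOn.inv₀ (by fun_prop)
      intro t ht
      rw [uIcc_of_le hu.2] at ht
      intro h; linarith [ht.1, hu.1]
    have hmem : ∀ t ∈ Icc u (0:ℝ), t ∈ Ioc (-1:ℝ) 0 :=
      fun t ht => ⟨lt_of_lt_of_le hu.1 ht.1, ht.2⟩
    have hFu : Fint W u = -∫ t in u..(0:ℝ), rhoW W t := by
      rw [Fint, intervalIntegral.integral_symm]
    have hlow : a₁ * (-Real.log (1+u)) ≤ ∫ t in u..(0:ℝ), rhoW W t := by
      have h := intervalIntegral.integral_mono_on hu.2 (hcont1.const_mul a₁) hρint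
        (fun t ht => (hptL t (hmem t ht)).1)
      rwa [intervalIntegral.integral_const_mul, int_inv_left hu] at h
    have hhigh : (∫ t in u..(0:ℝ), rhoW W t) ≤ a₂ * (-Real.log (1+u)) := by
      have h := intervalIntegral.integral_mono_on hu.2 hρint (hcont1.const_mul a₂)
        (fun t ht => (hptL t (hmem t ht)).2)
      rwa [intervalIntegral.integral_const_mul, int_inv_left hu] at h
    have hlogneg : Real.log (1+u) ≤ 0 :=
      Real.log_nonpos (by linarith [hu.1]) (by linarith [hu.2])
    constructor
    · rw [hFu]
      have h2 : A * Real.log (1+u) ≤ a₂ * Real.log (1+u) :=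
        mul_le_mul_of_nonpos_right hAa₂ hlogneg
      linarith
    · rw [hFu]
      have h2 : a₁ * Real.log (1+u) ≤ A⁻¹ * Real.log (1+u) :=
        mul_le_mul_of_nonpos_right hAinv hlogneg
      linarith

lemma Fint_contOn (hW : DoubleWell W) : ContinuousOn (Fint W) (Ioo (-1:ℝ) 1) :=
  fun u hu => (Fint_hasDerivAt hW hu).continuousAt.continuousWithinAt

lemma exists_q (hW : DoubleWell W) :
    ∃ q : ℝ → ℝ, (∀ s, q s ∈ Ioo (-1:ℝ) 1) ∧ ∀ s, Fint W (q s) = s := by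
  suffices h : ∀ s : ℝ, ∃ u, u ∈ Ioo (-1:ℝ) 1 ∧ Fint W u = s by
    choose q hq1 hq2 using h
    exact ⟨q, hq1, hq2⟩
  intro s
  obtain ⟨A, hA1, hR, hL⟩ := Fint_log_bounds hW
  have hApos : (0:ℝ) < A := by linarith
  have hexp1 : Real.exp (-(A * (|s|+1))) ≤ 1 := by
    apply Real.exp_le_one_iff.mpr
    have : 0 ≤ A * (|s|+1) := by positivity
    linarith
  have hexp0 : 0 < Real.exp (-(A * (|s|+1))) := Real.exp_pos _
  have h00 : 0 ≤ A * (|s|+1) := by positivity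
  set uP : ℝ := 1 - Real.exp (-(A * (|s|+1))) with huPdef
  set uN : ℝ := Real.exp (-(A * (|s|+1))) - 1 with huNdef
  have huPmem : uP ∈ Ico (0:ℝ) 1 := ⟨by simp [huPdef]; linarith, by simp [huPdef]; linarith⟩
  have huNmem : uN ∈ Ioc (-1:ℝ) 0 := ⟨by simp [huNdef]; linarith, by simp [huNdef]; linarith⟩
  have hlogP : -Real.log (1 - uP) = A * (|s|+1) := by
    rw [huPdef]
    simp [Real.log_exp]
  have hlogN : Real.log (1 + uN) = -(A * (|s|+1)) := by
    rw [huNdef]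
    rw [show 1 + (Real.exp (-(A * (|s|+1))) - 1) = Real.exp (-(A * (|s|+1))) by ring]
    exact Real.log_exp _
  have hsP : s ≤ Fint W uP := by
    have h := (hR uP huPmem).1
    rw [hlogP, ← mul_assoc, inv_mul_cancel₀ hApos.ne', one_mul] at h
    have := abs_nonneg s
    calc s ≤ |s| := le_abs_self s
      _ ≤ |s| + 1 := by linarith
      _ ≤ Fint W uP := h
  have hsN : Fint W uN ≤ s := by
    have h := (hL uN huNmem).2
    rw [hlogN, mul_neg, ← mul_assoc, inv_mul_cancel₀ hApos.ne', one_mul] at h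
    have h2 : -(|s|+1) ≤ s := by
      have := neg_abs_le s
      linarith
    linarith
  have hsub : Icc uN uP ⊆ Ioo (-1:ℝ) 1 := fun x hx =>
    ⟨lt_of_lt_of_le huNmem.1 hx.1, lt_of_le_of_lt hx.2 huPmem.2⟩
  have hle : uN ≤ uP := le_trans huNmem.2 huPmem.1
  have hivt := intermediate_value_Icc hle ((Fint_contOn hW).mono hsub)
  obtain ⟨u, humem, hFu⟩ := hivt ⟨hsN, hsP⟩
  exact ⟨u, hsub humem, hFu⟩

end auxx

/-- Proposition C.1: existence, uniqueness and exponential convergence of the standing wave. -/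
theorem standing_wave_exists_unique_exp_decay (W : ℝ → ℝ) (hW : DoubleWell W) :
    ∃ q : ℝ → ℝ, StandingWave W q ∧ (∀ q' : ℝ → ℝ, StandingWave W q' → q' = q) ∧
      ∃ C > 0, (∀ s : ℝ, 0 ≤ s → |q s - 1| ≤ C * Real.exp (-s / C)) ∧
        (∀ s : ℝ, s ≤ 0 → |q s + 1| ≤ C * Real.exp (s / C)) := by
  classical
  obtain ⟨q, hqmem, hqF⟩ := exists_q hW
  obtain ⟨A, hA1, hR, hL⟩ := Fint_log_bounds (W := W) hW
  have hApos : (0:ℝ) < A := by linarith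
  have hsm := Fint_strictMonoOn (W := W) hW
  have hWd : Differentiable ℝ W := hW.1.differentiable (by norm_num)
  have hW2 : ContDiff ℝ 2 (deriv W) :=
    (contDiff_succ_iff_deriv.mp (show ContDiff ℝ (2+1) W from by norm_num [hW.1])).2.2
  have hW'cont : Continuous (deriv W) := hW2.continuous
  -- strict monotonicity of q
  have hqsm : StrictMono q := by
    intro a b hab
    have h1 := (hsm.lt_iff_lt (hqmem a) (hqmem b)).mpr
    by_contra h
    push_neg at h
    rcases eq_or_lt_of_le h with heq | hlt
    · rw [← hqF a, ← hqF b, heq] at hab; exact lt_irrefl _ hab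
    · have := (hsm.lt_iff_lt (hqmem b) (hqmem a)).mpr hlt
      rw [hqF a, hqF b] at this; linarith
  have hqlt : ∀ a b : ℝ, Fint W a < b → a ∈ Ioo (-1:ℝ) 1 → a < q b := by
    intro a b h ha
    have := (hsm.lt_iff_lt ha (hqmem b)).mp
    rw [hqF b] at this
    exact this h
  have hqgt : ∀ a b : ℝ, b < Fint W a → a ∈ Ioo (-1:ℝ) 1 → q b < a := by
    intro a b h ha
    have := (hsm.lt_iff_lt (hqmem b) ha).mp
    rw [hqF b] at this
    exact this h
  -- q 0 = 0
  have hq0 : q 0 = 0 := by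
    apply hsm.injOn (hqmem 0) zero_mem
    rw [hqF 0, Fint_zero]
  -- continuity of q
  have hqcont : Continuous q := by
    rw [continuous_iff_continuousAt]
    intro s₀
    rw [ContinuousAt]
    apply tendsto_order.2
    constructor
    · intro a ha
      set b := max a ((q s₀ + -1)/2) with hbdef
      have hb1 : b < q s₀ := by
        apply max_lt ha
        have := (hqmem s₀).1; linarith
      have hbIoo : b ∈ Ioo (-1:ℝ) 1 := by
        constructor
        · have h1 := le_max_right a ((q s₀ + -1)/2)
          have := (hqmem s₀).1; linarith
        · have := (hqmem s₀).2; linarith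
      have hFb : Fint W b < s₀ := by
        have := (hsm.lt_iff_lt hbIoo (hqmem s₀)).mpr hb1
        rwa [hqF s₀] at this
      filter_upwards [Ioi_mem_nhds hFb] with s hs
      exact lt_of_le_of_lt (le_max_left _ _) (hqlt b s hs hbIoo)
    · intro a ha
      set b := min a ((q s₀ + 1)/2) with hbdef
      have hb1 : q s₀ < b := by
        apply lt_min ha
        have := (hqmem s₀).2; linarith
      have hbIoo : b ∈ Ioo (-1:ℝ) 1 := by
        constructor
        · have := (hqmem s₀).1; linarith
        · have h1 := min_le_right a ((q s₀ + 1)/2)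
          have := (hqmem s₀).2; linarith
      have hFb : s₀ < Fint W b := by
        have := (hsm.lt_iff_lt (hqmem s₀) hbIoo).mpr hb1
        rwa [hqF s₀] at this
      filter_upwards [Iio_mem_nhds hFb] with s hs
      exact lt_of_lt_of_le (hqgt b s hs hbIoo) (min_le_left _ _)
  -- derivative of q
  have hqd : ∀ s, HasDerivAt q (Real.sqrt (2 * W (q s))) s := by
    intro s
    have h := HasDerivAt.of_local_left_inverse hqcont.continuousAt
      (Fint_hasDerivAt hW (hqmem s)) (rhoW_pos hW (hqmem s)).ne'
      (Filter.Eventually.of_forall hqF)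
    simpa [rhoW, inv_inv] using h
  have hqdiff : Differentiable ℝ q := fun s => (hqd s).differentiableAt
  have hqderiv : deriv q = fun s => Real.sqrt (2 * W (q s)) := funext fun s => (hqd s).deriv
  -- second derivative
  have hqd2 : ∀ s, HasDerivAt (fun s => Real.sqrt (2 * W (q s))) (deriv W (q s)) s := by
    intro s
    have hWq : (0:ℝ) < 2 * W (q s) := by
      have := hW.2.2.2.2.1 (q s) (hqmem s); linarith
    have hinner : HasDerivAt (fun s => 2 * W (q s))
        (2 * (deriv W (q s) * Real.sqrt (2 * W (q s)))) s :=
      (((hWd (q s)).hasDerivAt.comp s (hqd s))).const_mul 2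
    have houter := (Real.hasDerivAt_sqrt hWq.ne').comp s hinner
    refine houter.congr_deriv ?_
    have hs0 : Real.sqrt (2 * W (q s)) ≠ 0 := (Real.sqrt_pos.mpr hWq).ne'
    rw [show 1 / (2 * Real.sqrt (2 * W (q s))) * (2 * (deriv W (q s) * Real.sqrt (2 * W (q s))))
      = deriv W (q s) * (Real.sqrt (2 * W (q s)) * (Real.sqrt (2 * W (q s)))⁻¹) from by ring,
      mul_inv_cancel₀ hs0, mul_one]
  have hqode : ∀ s, deriv (deriv q) s = deriv W (q s) := by
    intro s
    rw [hqderiv]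
    exact (hqd2 s).deriv
  -- C² regularity
  have hqC2 : ContDiff ℝ 2 q := by
    rw [show (2 : WithTop ℕ∞) = 1 + 1 from by norm_num, contDiff_succ_iff_deriv]
    refine ⟨hqdiff, by simp, ?_⟩
    rw [hqderiv, contDiff_one_iff_deriv]
    constructor
    · exact fun s => (hqd2 s).differentiableAt
    · have h : deriv (fun s => Real.sqrt (2 * W (q s))) = fun s => deriv W (q s) :=
        funext fun s => (hqd2 s).deriv
      rw [h]
      exact hW'cont.comp hqcont
  -- decay estimates
  have hqge0 : ∀ s : ℝ, 0 ≤ s → q s ∈ Ico (0:ℝ) 1 :=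
    fun s hs => ⟨hq0 ▸ hqsm.monotone hs, (hqmem s).2⟩
  have hqle0 : ∀ s : ℝ, s ≤ 0 → q s ∈ Ioc (-1:ℝ) 0 :=
    fun s hs => ⟨(hqmem s).1, hq0 ▸ hqsm.monotone hs⟩
  have hdecayR : ∀ s : ℝ, 0 ≤ s → 1 - q s ≤ Real.exp (-s/A) := by
    intro s hs
    have hmem := hqge0 s hs
    have h := (hR (q s) hmem).2
    rw [hqF s] at h
    have h1 : (0:ℝ) < 1 - q s := by linarith [hmem.2]
    have h2 : Real.log (1 - q s) ≤ -s/A := by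
      have h3 : s / A ≤ -Real.log (1 - q s) := by
        rw [div_le_iff₀ hApos, mul_comm]
        linarith
      rw [neg_div]
      linarith
    calc 1 - q s = Real.exp (Real.log (1 - q s)) := (Real.exp_log h1).symm
      _ ≤ Real.exp (-s/A) := Real.exp_le_exp.mpr h2
  have hdecayL : ∀ s : ℝ, s ≤ 0 → 1 + q s ≤ Real.exp (s/A) := by
    intro s hs
    have hmem := hqle0 s hs
    have h := (hL (q s) hmem).1
    rw [hqF s] at h
    have h1 : (0:ℝ) < 1 + q s := by linarith [hmem.1]
    have h2 : Real.log (1 + q s) ≤ s/A := by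
      rw [le_div_iff₀ hApos, mul_comm]
      linarith
    calc 1 + q s = Real.exp (Real.log (1 + q s)) := (Real.exp_log h1).symm
      _ ≤ Real.exp (s/A) := Real.exp_le_exp.mpr h2
  -- limits
  have htop : Tendsto q atTop (𝓝 1) := by
    apply tendsto_of_tendsto_of_tendsto_of_le_of_le'
      (g := fun s : ℝ => 1 - Real.exp (-s/A)) (h := fun _ : ℝ => (1:ℝ))
    · have h1 : Tendsto (fun s : ℝ => -s/A) atTop atBot :=
        (tendsto_neg_atTop_atBot : Tendsto (fun s : ℝ => -s) atTop atBot).atBot_div_const hApos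
      have h2 : Tendsto (fun s : ℝ => Real.exp (-s/A)) atTop (𝓝 0) :=
        Real.tendsto_exp_atBot.comp h1
      have h3 := (tendsto_const_nhds (x := (1:ℝ)) (f := atTop (α := ℝ))).sub h2
      simpa using h3
    · exact tendsto_const_nhds
    · filter_upwards [eventually_ge_atTop (0:ℝ)] with s hs
      linarith [hdecayR s hs]
    · filter_upwards with s
      exact (hqmem s).2.le
  have hbot : Tendsto q atBot (𝓝 (-1)) := by
    apply tendsto_of_tendsto_of_tendsto_of_le_of_le'
      (g := fun _ : ℝ => (-1:ℝ)) (h := fun s : ℝ => Real.exp (s/A) - 1)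
    · exact tendsto_const_nhds
    · have h1 : Tendsto (fun s : ℝ => s/A) atBot atBot :=
        (tendsto_id (α := ℝ)).atBot_div_const hApos
      have h2 : Tendsto (fun s : ℝ => Real.exp (s/A)) atBot (𝓝 0) :=
        Real.tendsto_exp_atBot.comp h1
      have h3 := h2.sub (tendsto_const_nhds (x := (1:ℝ)) (f := atBot (α := ℝ)))
      simpa using h3
    · filter_upwards with s
      exact (hqmem s).1.le
    · filter_upwards [eventually_le_atBot (0:ℝ)] with s hs
      linarith [hdecayL s hs]
  refine ⟨q, ⟨hqC2, hqsm, hqmem, hq0, hqode, htop, hbot⟩, ?_, A, hApos, ?_, ?_⟩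
  · -- uniqueness
    intro q' hq'
    obtain ⟨hq'C2, hq'sm, hq'mem, hq'0, hq'ode, hq'top, hq'bot⟩ := hq'
    have hq'diff : Differentiable ℝ q' := hq'C2.differentiable (by norm_num)
    have hdq'C1 : ContDiff ℝ 1 (deriv q') :=
      (contDiff_succ_iff_deriv.mp (show ContDiff ℝ (1+1) q' from by norm_num [hq'C2])).2.2
    have hdq'diff : Differentiable ℝ (deriv q') := hdq'C1.differentiable (by norm_num)
    have hq'dnn : ∀ s, 0 ≤ deriv q' s := by
      intro s
      have h := (hq'diff s).hasDerivAt
      rw [hasDerivAt_iff_tendsto_slope] at h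
      apply ge_of_tendsto h
      filter_upwards [self_mem_nhdsWithin] with y hy
      simp only [mem_compl_iff, mem_singleton_iff] at hy
      rw [slope_def_field]
      rcases lt_or_gt_of_ne hy with hlt | hgt
      · apply div_nonneg_iff.mpr
        right
        exact ⟨sub_nonpos.2 (hq'sm.monotone hlt.le), by linarith⟩
      · apply div_nonneg (sub_nonneg.2 (hq'sm.monotone hgt.le)) (by linarith)
    set E : ℝ → ℝ := fun s => (deriv q' s)^2/2 - W (q' s) with hEdef
    have hEd : ∀ s, HasDerivAt E 0 s := by
      intro s
      have h1 : HasDerivAt (deriv q') (deriv W (q' s)) s := by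
        have := (hdq'diff s).hasDerivAt
        rwa [hq'ode s] at this
      have h2 : HasDerivAt (fun s => (deriv q' s)^2/2) (deriv W (q' s) * deriv q' s) s := by
        have := (h1.pow 2).div_const 2
        refine this.congr_deriv ?_
        ring
      have h3 : HasDerivAt (fun s => W (q' s)) (deriv W (q' s) * deriv q' s) s :=
        (hWd (q' s)).hasDerivAt.comp s (hq'diff s).hasDerivAt
      have h4 := h2.sub h3
      exact h4.congr_deriv (sub_self _)
    have hEdiff : Differentiable ℝ E := fun s => (hEd s).differentiableAt
    have hEconst : ∀ s, E s = E 0 :=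
      fun s => is_const_of_deriv_eq_zero hEdiff (fun x => (hEd x).deriv) s 0
    have hkey : ∀ s, (deriv q' s)^2 = 2 * E 0 + 2 * W (q' s) := by
      intro s
      have h1 : (deriv q' s)^2/2 - W (q' s) = E 0 := hEconst s
      linear_combination 2 * h1
    have hWto0 : Tendsto (fun s => W (q' s)) atTop (𝓝 0) := by
      have h1 := (hWd.continuous.continuousAt (x := (1:ℝ))).tendsto.comp hq'top
      rwa [hW.2.2.2.1] at h1
    have hE0nn : 0 ≤ E 0 := by
      have h1 : Tendsto (fun s => -W (q' s)) atTop (𝓝 0) := by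
        simpa using hWto0.neg
      apply le_of_tendsto h1
      filter_upwards with s
      nlinarith [hkey s, sq_nonneg (deriv q' s)]
    have hE0np : E 0 ≤ 0 := by
      by_contra hconpos
      push_neg at hconpos
      set κ := Real.sqrt (2 * E 0) with hkdef
      have hκpos : 0 < κ := Real.sqrt_pos.mpr (by linarith)
      have hlow : ∀ s, κ ≤ deriv q' s := by
        intro s
        have h1 : κ^2 ≤ (deriv q' s)^2 := by
          rw [hkdef, Real.sq_sqrt (by linarith : (0:ℝ) ≤ 2 * E 0)]
          have hWnn := hW.2.1 (q' s) (Ioo_subset_Icc_self (hq'mem s))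
          rw [hkey s]; linarith
        calc κ = Real.sqrt (κ^2) := (Real.sqrt_sq hκpos.le).symm
          _ ≤ Real.sqrt ((deriv q' s)^2) := Real.sqrt_le_sqrt h1
          _ = deriv q' s := Real.sqrt_sq (hq'dnn s)
      have hmono : Monotone (fun s => q' s - κ * s) := by
        apply monotone_of_deriv_nonneg
        · exact hq'diff.sub (differentiable_id.const_mul κ)
        · intro x
          have hd : HasDerivAt (fun s => q' s - κ * s) (deriv q' x - κ * 1) x :=
            (hq'diff x).hasDerivAt.sub ((hasDerivAt_id x).const_mul κ)
          rw [hd.deriv]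
          linarith [hlow x]
      have hgr : q' 0 - κ * 0 ≤ q' (2/κ) - κ * (2/κ) := hmono (by positivity)
      have hcc : κ * (2/κ) = 2 := by field_simp
      rw [hq'0, hcc] at hgr
      have := (hq'mem (2/κ)).2
      linarith
    have hE0 : E 0 = 0 := le_antisymm hE0np hE0nn
    have hvel : ∀ s, deriv q' s = Real.sqrt (2 * W (q' s)) := by
      intro s
      have h1 : (deriv q' s)^2 = 2 * W (q' s) := by
        rw [hkey s, hE0]; ring
      rw [← h1, Real.sqrt_sq (hq'dnn s)]
    have hGd : ∀ s, HasDerivAt (fun s => Fint W (q' s) - s) 0 s := by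
      intro s
      have h1 := (Fint_hasDerivAt hW (hq'mem s)).comp s (hq'diff s).hasDerivAt
      have h2 : rhoW W (q' s) * deriv q' s = 1 := by
        rw [hvel s, rhoW]
        exact inv_mul_cancel₀ (sqrt2W_pos hW (hq'mem s)).ne'
      rw [h2] at h1
      exact (h1.sub (hasDerivAt_id s)).congr_deriv (sub_self _)
    have hGconst : ∀ s, Fint W (q' s) - s = Fint W (q' 0) - 0 :=
      fun s => is_const_of_deriv_eq_zero (fun x => (hGd x).differentiableAt)
        (fun x => (hGd x).deriv) s 0
    funext s
    apply hsm.injOn (hq'mem s) (hqmem s)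
    have h1 := hGconst s
    rw [hq'0, Fint_zero] at h1
    rw [hqF s]
    linarith
  · -- right decay
    intro s hs
    have h := hdecayR s hs
    have habs : |q s - 1| = 1 - q s := by
      rw [abs_sub_comm]
      exact abs_of_nonneg (by linarith [(hqmem s).2])
    rw [habs]
    calc 1 - q s ≤ Real.exp (-s/A) := h
      _ ≤ A * Real.exp (-s/A) := by nlinarith [Real.exp_pos (-s/A)]
  · -- left decay
    intro s hs
    have h := hdecayL s hs
    have habs : |q s + 1| = q s + 1 := abs_of_nonneg (by linarith [(hqmem s).1])
    rw [habs]
    calc q s + 1 ≤ Real.exp (s/A) := by linarith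
      _ ≤ A * Real.exp (s/A) := by nlinarith [Real.exp_pos (s/A)]

end
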